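/- The map Φ̃_{i,ε} : I_{6m}^{⊗n} → I_{2m}^{⊗n} defined by Φ̃(v)_k = c^{2m}(v_k) for k ≠ i, Φ̃(v)_i = max{c^{2m}(v_i), 2m − D(σ_i v)} if ε = 0, and Φ̃(v)_i = min{c^{2m}(v_i), D(σ_i v)} if ε = 1, where D(w) = max_j |w_j − φ(w_j)| with φ(x) = clamp of x to [2m, 4m], is a digraph map whose image lies in the open-box subdigraph |⊓ⁿ_{i,ε}|_{2m}, and whose restriction to |⊓ⁿ_{i,ε}|_{6m} equals the central truncation c^{2m} applied coordinatewise. -/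

import Mathlib

/-- Arrows of the interval `I_M` on `{0,…,M}` (ignoring the bound, which is imposed
separately): besides loops, `2i → 2i+1` and `2j+2 → 2j+1`, i.e. an arrow from an even
vertex to each of its neighbours. -/
def IEr (a b : ℕ) : Prop :=
  a = b ∨ (a % 2 = 0 ∧ (b = a + 1 ∨ a = b + 1))

/-- Edge relation of the `n`-fold box power `I_M^{⊗n}`, on tuples `v : ℕ → ℕ`
(only the coordinates `< n` matter): all coordinates are `≤ M`, and the two tuples
agree except in one coordinate, where they form an arrow of `I_M`. -/
def CubeE (n M : ℕ) (v w : ℕ → ℕ) : Prop :=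
  (∀ l < n, v l ≤ M ∧ w l ≤ M) ∧
  ∃ k < n, IEr (v k) (w k) ∧ ∀ l < n, l ≠ k → v l = w l

/-- The central truncation `c^{2m} : I_{6m} → I_{2m}`:
`x ↦ 0` for `x ≤ 2m`, `x ↦ x − 2m` for `2m ≤ x ≤ 4m`, `x ↦ 2m` for `x ≥ 4m`. -/
def c2m (m x : ℕ) : ℕ := min x (4 * m) - 2 * m

/-- `φ : {0,…,6m} → {0,…,6m}`, clamping to `[2m, 4m]`. -/
def phiClamp (m x : ℕ) : ℕ := max (2 * m) (min x (4 * m))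

/-- `D(σ_i v) = max_{j ≠ i, j < n} |v_j − φ(v_j)|`. -/
def Dphi (m n i : ℕ) (v : ℕ → ℕ) : ℕ :=
  Finset.sup ((Finset.range n).erase i) (fun j => Nat.dist (v j) (phiClamp m (v j)))

/-- The map `Φ̃_{i,ε} : I_{6m}^{⊗n} → I_{2m}^{⊗n}`. -/
def PhiTilde (m n i ε : ℕ) (v : ℕ → ℕ) : ℕ → ℕ := fun k =>
  if k = i then
    (if ε = 0 then max (c2m m (v i)) (2 * m - Dphi m n i v)
     else min (c2m m (v i)) (Dphi m n i v))
  else c2m m (v k)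

/-- The vertex set of the open box `|⊓ⁿ_{i,ε}|_M ⊆ I_M^{⊗n}`: tuples `v` with all
coordinates `≤ M` such that either some coordinate `v_k` with `k ≠ i` lies in
`{0, M}`, or `v_i = (1−ε)·M`. -/
def HornSet (n M i ε : ℕ) : Set (ℕ → ℕ) :=
  {v | (∀ l < n, v l ≤ M) ∧
    ((∃ k < n, k ≠ i ∧ (v k = 0 ∨ v k = M)) ∨ v i = (1 - ε) * M)}

lemma dist_clamp_eq (m x : ℕ) : Nat.dist x (phiClamp m x) = (2*m - x) + (x - 4*m) := by
  unfold phiClamp Nat.dist; omega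

lemma master (x y t s u : ℕ) (hx : x % 2 = 0) (hxy : y = x + 1 ∨ x = y ∨ x = y + 1)
    (hu : u % 2 = 0) :
    IEr (min x t) (min y t) ∧ IEr (max x t) (max y t) ∧
    IEr (min t (max x s)) (min t (max y s)) ∧
    IEr (max t (u - max x s)) (max t (u - max y s)) := by
  unfold IEr; omega

lemma c2m_facts (m a b : ℕ) (ha : a % 2 = 0) (hab : b = a + 1 ∨ a = b + 1) :
    c2m m a % 2 = 0 ∧ (c2m m b = c2m m a + 1 ∨ c2m m a = c2m m b ∨ c2m m a = c2m m b + 1) := by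
  unfold c2m; omega

lemma f_facts (m a b : ℕ) (ha : a % 2 = 0) (hab : b = a + 1 ∨ a = b + 1) :
    Nat.dist a (phiClamp m a) % 2 = 0 ∧
    (Nat.dist b (phiClamp m b) = Nat.dist a (phiClamp m a) + 1 ∨
     Nat.dist a (phiClamp m a) = Nat.dist b (phiClamp m b) ∨
     Nat.dist a (phiClamp m a) = Nat.dist b (phiClamp m b) + 1) := by
  rw [dist_clamp_eq, dist_clamp_eq]; omega

lemma trich (m a b : ℕ) (hab : b = a + 1 ∨ a = b + 1) :
    c2m m a = c2m m b ∨ Nat.dist a (phiClamp m a) = Nat.dist b (phiClamp m b) := by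
  unfold c2m; rw [dist_clamp_eq, dist_clamp_eq]; omega

lemma IEr_of (x y : ℕ) (hx : x % 2 = 0) (hxy : y = x + 1 ∨ x = y ∨ x = y + 1) : IEr x y := by
  unfold IEr; omega

lemma c2m_le (m x : ℕ) : c2m m x ≤ 2*m := by unfold c2m; omega

lemma Dphi_split (m n i k : ℕ) (hk : k < n) (hki : k ≠ i) (v : ℕ → ℕ) :
    Dphi m n i v = max (Nat.dist (v k) (phiClamp m (v k)))
      ((((Finset.range n).erase i).erase k).sup
        (fun j => Nat.dist (v j) (phiClamp m (v j)))) := by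
  have hkS : k ∈ (Finset.range n).erase i :=
    Finset.mem_erase.mpr ⟨hki, Finset.mem_range.mpr hk⟩
  unfold Dphi
  conv_lhs => rw [← Finset.insert_erase hkS]
  rw [Finset.sup_insert]

lemma Dphi_congr (m n i : ℕ) (v w : ℕ → ℕ) (h : ∀ l < n, l ≠ i → v l = w l) :
    Dphi m n i v = Dphi m n i w := by
  unfold Dphi
  apply Finset.sup_congr rfl
  intro j hj
  obtain ⟨hji, hjr⟩ := Finset.mem_erase.mp hj
  rw [h j (Finset.mem_range.mp hjr) hji]

lemma Dphi_le (m n i : ℕ) (v : ℕ → ℕ) (hv : ∀ l < n, v l ≤ 6*m) : Dphi m n i v ≤ 2*m := by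
  apply Finset.sup_le
  intro j hj
  obtain ⟨hji, hjr⟩ := Finset.mem_erase.mp hj
  rw [dist_clamp_eq]
  have := hv j (Finset.mem_range.mp hjr)
  omega

lemma PhiTilde_at (m n i ε : ℕ) (v : ℕ → ℕ) :
    PhiTilde m n i ε v i =
      (if ε = 0 then max (c2m m (v i)) (2 * m - Dphi m n i v)
       else min (c2m m (v i)) (Dphi m n i v)) := by
  simp [PhiTilde]

lemma PhiTilde_ne (m n i ε k : ℕ) (hki : k ≠ i) (v : ℕ → ℕ) :
    PhiTilde m n i ε v k = c2m m (v k) := by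
  simp [PhiTilde, hki]

/-- The map `Φ̃_{i,ε}` is a digraph map `I_{6m}^{⊗n} → I_{2m}^{⊗n}` whose image lies
in the open box `|⊓ⁿ_{i,ε}|_{2m}`, and whose restriction to `|⊓ⁿ_{i,ε}|_{6m}` equals
the central truncation `c^{2m}` applied coordinatewise. -/
theorem phiTilde_properties (m n i ε : ℕ) (hi : i < n) (hε : ε ≤ 1) :
    (∀ v w, CubeE n (6 * m) v w → CubeE n (2 * m) (PhiTilde m n i ε v) (PhiTilde m n i ε w)) ∧
    (∀ v : ℕ → ℕ, (∀ l < n, v l ≤ 6 * m) → PhiTilde m n i ε v ∈ HornSet n (2 * m) i ε) ∧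
    (∀ v ∈ HornSet n (6 * m) i ε, ∀ k < n, PhiTilde m n i ε v k = c2m m (v k)) := by
  have hPb : ∀ (u : ℕ → ℕ) (l : ℕ), PhiTilde m n i ε u l ≤ 2*m := by
    intro u l
    simp only [PhiTilde]
    split
    · split
      · exact max_le (c2m_le _ _) (Nat.sub_le _ _)
      · exact le_trans (min_le_left _ _) (c2m_le _ _)
    · exact c2m_le _ _
  refine ⟨?_, ?_, ?_⟩
  · -- digraph map
    rintro v w ⟨hb, k, hkn, hIE, hag⟩
    refine ⟨fun l _ => ⟨hPb v l, hPb w l⟩, ?_⟩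
    by_cases hvw : v k = w k
    · have hall : ∀ l < n, v l = w l := by
        intro l hl
        by_cases h : l = k
        · rw [h, hvw]
        · exact hag l hl h
      have hD : Dphi m n i v = Dphi m n i w :=
        Dphi_congr m n i v w (fun l hl _ => hall l hl)
      refine ⟨i, hi, ?_, ?_⟩
      · left
        rw [PhiTilde_at, PhiTilde_at, hall i hi, hD]
      · intro l hl hli
        rw [PhiTilde_ne m n i ε l hli, PhiTilde_ne m n i ε l hli, hall l hl]
    · have hstep : (v k) % 2 = 0 ∧ (w k = v k + 1 ∨ v k = w k + 1) := by
        rcases hIE with h | h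
        · exact absurd h hvw
        · exact h
      obtain ⟨hpar, hs⟩ := hstep
      by_cases hki : k = i
      · rw [hki] at hpar hs
        have hD : Dphi m n i v = Dphi m n i w :=
          Dphi_congr m n i v w (fun l hl hli => hag l hl (by omega))
        obtain ⟨hc2e, hc2s⟩ := c2m_facts m (v i) (w i) hpar hs
        refine ⟨i, hi, ?_, ?_⟩
        · rw [PhiTilde_at, PhiTilde_at, ← hD]
          split
          · exact (master _ _ _ 0 0 hc2e hc2s (by omega)).2.1
          · exact (master _ _ _ 0 0 hc2e hc2s (by omega)).1
        · intro l hl hli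
          rw [PhiTilde_ne m n i ε l hli, PhiTilde_ne m n i ε l hli, hag l hl (by omega)]
      · have hvwi : v i = w i := hag i hi (fun h => hki h.symm)
        have hO : ((((Finset.range n).erase i).erase k).sup
              (fun j => Nat.dist (v j) (phiClamp m (v j))))
            = ((((Finset.range n).erase i).erase k).sup
              (fun j => Nat.dist (w j) (phiClamp m (w j)))) := by
          apply Finset.sup_congr rfl
          intro j hj
          obtain ⟨hjk, hjS⟩ := Finset.mem_erase.mp hj
          obtain ⟨hji, hjr⟩ := Finset.mem_erase.mp hjS
          rw [hag j (Finset.mem_range.mp hjr) hjk]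
        have hDv := Dphi_split m n i k hkn hki v
        have hDw := Dphi_split m n i k hkn hki w
        rcases trich m (v k) (w k) hs with hc | hf
        · -- c2m equal: the image differs (at most) in coordinate i
          refine ⟨i, hi, ?_, ?_⟩
          · obtain ⟨hfe, hfs⟩ := f_facts m (v k) (w k) hpar hs
            rw [PhiTilde_at, PhiTilde_at, hvwi, hDv, hDw, ← hO]
            split
            · exact (master _ _ _ _ (2*m) hfe hfs (by omega)).2.2.2
            · exact (master _ _ _ _ 0 hfe hfs (by omega)).2.2.1
          · intro l hl hli
            rw [PhiTilde_ne m n i ε l hli, PhiTilde_ne m n i ε l hli]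
            by_cases hlk : l = k
            · rw [hlk]; exact hc
            · rw [hag l hl hlk]
        · -- dist-to-clamp equal: the image differs (at most) in coordinate k
          refine ⟨k, hkn, ?_, ?_⟩
          · rw [PhiTilde_ne m n i ε k hki, PhiTilde_ne m n i ε k hki]
            obtain ⟨hc2e, hc2s⟩ := c2m_facts m (v k) (w k) hpar hs
            exact IEr_of _ _ hc2e hc2s
          · intro l hl hlk
            by_cases hli : l = i
            · rw [hli, PhiTilde_at, PhiTilde_at]
              have hD : Dphi m n i v = Dphi m n i w := by rw [hDv, hDw, hf, hO]
              rw [hvwi, hD]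
            · rw [PhiTilde_ne m n i ε l hli, PhiTilde_ne m n i ε l hli, hag l hl hlk]
  · -- image lands in the horn
    intro v hv
    refine ⟨fun l _ => hPb v l, ?_⟩
    by_cases hex : ∃ k, k < n ∧ k ≠ i ∧ (v k ≤ 2*m ∨ 4*m ≤ v k)
    · obtain ⟨k, hk, hki, hvk⟩ := hex
      left
      refine ⟨k, hk, hki, ?_⟩
      rw [PhiTilde_ne m n i ε k hki]
      unfold c2m; omega
    · right
      push_neg at hex
      have hD : Dphi m n i v = 0 := by
        apply Nat.le_zero.mp
        unfold Dphi
        apply Finset.sup_le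
        intro j hj
        obtain ⟨hji, hjr⟩ := Finset.mem_erase.mp hj
        have := hex j (Finset.mem_range.mp hjr) hji
        rw [dist_clamp_eq]; omega
      rw [PhiTilde_at, hD]
      have := c2m_le m (v i)
      interval_cases ε <;> simp <;> omega
  · -- restriction to the horn is the truncation
    rintro v ⟨hbv, hor⟩ k hk
    by_cases hki : k = i
    · rw [hki, PhiTilde_at]
      have hDle : Dphi m n i v ≤ 2*m := Dphi_le m n i v hbv
      have hcle := c2m_le m (v i)
      rcases hor with ⟨k0, hk0, hk0i, h0⟩ | hvi
      · have hDge : 2*m ≤ Dphi m n i v := by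
          have hmem : k0 ∈ (Finset.range n).erase i :=
            Finset.mem_erase.mpr ⟨hk0i, Finset.mem_range.mpr hk0⟩
          have hle : (2*m - v k0) + (v k0 - 4*m) ≤ Dphi m n i v := by
            unfold Dphi
            rw [← dist_clamp_eq]
            exact Finset.le_sup (f := fun j => Nat.dist (v j) (phiClamp m (v j))) hmem
          have := hbv k0 hk0
          omega
        split
        · omega
        · omega
      · split
        · rename_i h0'
          subst h0'
          have : c2m m (v i) = 2*m := by unfold c2m; omega
          omega
        · rename_i h1'
          have hε1 : ε = 1 := by omega
          subst hε1
          have : c2m m (v i) = 0 := by unfold c2m; omega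
          omega
    · rw [PhiTilde_ne m n i ε k hki]
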